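/- Let G be a simple graph on a finite vertex set V with |V| = N and let i, j ∈ V be distinct. For every (i,j)-feasible flow f for G and every (i,j)-dual-feasible triple (t,u,v) for G, the dual value Σ_{{k,l}∈E} u({k,l}) + t(i) − t(j) is at most the primal value Σ_{k,l∈V} f(k,l). (Weak duality between the paper's primal and dual shortest-path formulations.) -/

import Mathlib

/-- `f : V → V → ℝ` is an `(i,j)`-feasible flow for the simple graph `G`
(a feasible point of the paper's primal shortest-path LP (10)–(14)). -/
def IsFeasibleFlow {V : Type*} [Fintype V] [DecidableEq V]
    (G : SimpleGraph V) (i j : V) (f : V → V → ℝ) : Prop :=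
  (∀ k l, 0 ≤ f k l) ∧
  (∀ k, f k k = 0) ∧
  (∀ k l, G.Adj k l → f k l + f l k ≤ 1) ∧
  (∀ k l, k ≠ l → ¬ G.Adj k l → f k l = 0) ∧
  (∀ k, (∑ l, f k l) - (∑ l, f l k) =
    if k = i then 1 else if k = j then -1 else 0)

/-- `(t, u, v)` is a dual-feasible triple for the simple graph `G`
(a feasible point of the paper's dual shortest-path LP (15)–(19)), where
`u` and `v` are indexed by unordered pairs `{k,l}` of distinct vertices and
`N - 2 = |V| - 2` is the "big-M" coefficient. -/
def IsDualFeasible {V : Type*} [Fintype V] [DecidableEq V]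
    (G : SimpleGraph V) [DecidableRel G.Adj]
    (t : V → ℝ) (u v : Sym2 V → ℝ) : Prop :=
  ∀ k l : V, k ≠ l →
    v s(k, l) + t k - t l ≤ 1 ∧
    v s(k, l) + t l - t k ≤ 1 ∧
    u s(k, l) ≤ v s(k, l) +
      ((Fintype.card V : ℝ) - 2) * (1 - if G.Adj k l then 1 else 0) ∧
    u s(k, l) ≤ 0 ∧ v s(k, l) ≤ 0

/-- The objective value of the dual triple `(t, u, v)` for the vertex pair
`(i, j)`: `∑_{{k,l}∈E} u {k,l} + t i - t j`, the sum running over all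
unordered pairs of distinct vertices. -/
def dualValue {V : Type*} [Fintype V] [DecidableEq V]
    (t : V → ℝ) (u : Sym2 V → ℝ) (i j : V) : ℝ :=
  (∑ e ∈ Finset.univ.filter (fun e : Sym2 V => ¬ e.IsDiag), u e) + t i - t j


lemma sym2_fiber_sum {V : Type*} [Fintype V] [DecidableEq V] (g : V → V → ℝ) :
    ∑ p ∈ Finset.univ.offDiag, g p.1 p.2
      = ∑ e ∈ Finset.univ.filter (fun e : Sym2 V => ¬ e.IsDiag),
          Sym2.lift ⟨fun a b => g a b + g b a, fun a b => add_comm _ _⟩ e := by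
  rw [← Finset.sum_fiberwise_of_maps_to (g := fun p : V × V => s(p.1, p.2)) (t := Finset.univ.filter (fun e : Sym2 V => ¬ e.IsDiag)) ?_]
  · refine Finset.sum_congr rfl ?_
    intro e he
    simp only [Finset.mem_filter] at he
    induction e using Sym2.ind with
    | _ a b =>
      have hab : a ≠ b := by simpa using he.2
      have hset : (Finset.univ.offDiag).filter (fun p : V × V => s(p.1, p.2) = s(a, b))
          = {(a, b), (b, a)} := by
        ext ⟨x, y⟩
        simp only [Finset.mem_filter, Finset.mem_offDiag, Finset.mem_univ, true_and,
          Finset.mem_insert, Finset.mem_singleton, Prod.mk.injEq, Sym2.eq_iff]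
        constructor
        · rintro ⟨_, (⟨rfl, rfl⟩ | ⟨rfl, rfl⟩)⟩ <;> simp
        · rintro (⟨rfl, rfl⟩ | ⟨rfl, rfl⟩) <;> simp [hab, hab.symm]
      rw [hset, Finset.sum_pair (by simp [hab, Prod.ext_iff])]
      simp
  · intro p hp
    simp only [Finset.mem_offDiag] at hp
    simp [Sym2.mk_isDiag_iff, hp.2.2]

lemma sum_eq_offDiag {V : Type*} [Fintype V] [DecidableEq V] (g : V → V → ℝ)
    (h : ∀ k, g k k = 0) :
    ∑ k, ∑ l, g k l = ∑ p ∈ Finset.univ.offDiag, g p.1 p.2 := by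
  rw [← Finset.sum_product', ← Finset.diag_union_offDiag Finset.univ,
      Finset.sum_union (Finset.disjoint_diag_offDiag _)]
  simp [Finset.sum_diag, h]

/-- **Weak duality between the paper's primal and dual shortest-path
formulations.**  For every `(i,j)`-feasible flow `f` for `G` and every
`(i,j)`-dual-feasible triple `(t,u,v)` for `G`, the dual value
`∑_{{k,l}∈E} u {k,l} + t i - t j` is at most the primal value
`∑_{k,l} f k l`. -/
theorem shortestPath_weak_duality {V : Type*} [Fintype V] [DecidableEq V]
    (G : SimpleGraph V) [DecidableRel G.Adj] (i j : V) (hij : i ≠ j)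
    (f : V → V → ℝ) (t : V → ℝ) (u v : Sym2 V → ℝ)
    (hf : IsFeasibleFlow G i j f) (hd : IsDualFeasible G t u v) :
    dualValue t u i j ≤ ∑ k, ∑ l, f k l := by
  obtain ⟨hpos, hdiag, hcap, hnadj, hcons⟩ := hf
  show (∑ e ∈ Finset.univ.filter (fun e : Sym2 V => ¬ e.IsDiag), u e) + t i - t j
      ≤ ∑ k, ∑ l, f k l
  -- Step 1: potential difference as a flow sum
  have h0 : t i - t j = ∑ p ∈ Finset.univ.offDiag, f p.1 p.2 * (t p.1 - t p.2) := by
    have e1 : t i - t j = ∑ k, t k * ((∑ l, f k l) - (∑ l, f l k)) := by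
      have : ∀ k : V, t k * ((∑ l, f k l) - (∑ l, f l k))
          = (if k = i then t k else 0) + (if k = j then -t k else 0) := by
        intro k
        rw [hcons k]
        by_cases h1 : k = i <;> by_cases h2 : k = j <;>
          simp_all [h1, h2] <;> ring
      rw [Finset.sum_congr rfl fun k _ => this k, Finset.sum_add_distrib,
        Finset.sum_ite_eq' Finset.univ i (fun k => t k),
        Finset.sum_ite_eq' Finset.univ j (fun k => -t k)]
      simp only [Finset.mem_univ, if_true]
      ring
    have e2 : ∑ k, t k * ((∑ l, f k l) - (∑ l, f l k))
        = ∑ k, ∑ l, f k l * (t k - t l) := by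
      have a : ∑ k, t k * (∑ l, f k l) = ∑ k, ∑ l, f k l * t k := by
        simp_rw [Finset.mul_sum]
        exact Finset.sum_congr rfl fun k _ => Finset.sum_congr rfl fun l _ => mul_comm _ _
      have c : ∑ k, t k * (∑ l, f l k) = ∑ k, ∑ l, f k l * t l := by
        simp_rw [Finset.mul_sum]
        rw [Finset.sum_comm]
        exact Finset.sum_congr rfl fun k _ => Finset.sum_congr rfl fun l _ => mul_comm _ _
      simp_rw [mul_sub]
      rw [Finset.sum_sub_distrib, a, c, ← Finset.sum_sub_distrib]
      refine Finset.sum_congr rfl fun k _ => ?_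
      rw [← Finset.sum_sub_distrib]
    rw [e1, e2, sum_eq_offDiag _ (fun k => by simp)]
  -- weights
  have key : ∀ e ∈ Finset.univ.filter (fun e : Sym2 V => ¬ e.IsDiag),
      u e + Sym2.lift ⟨fun a b => f a b * (t a - t b) + f b a * (t b - t a),
        fun a b => add_comm _ _⟩ e
      ≤ Sym2.lift ⟨fun a b => f a b + f b a, fun a b => add_comm _ _⟩ e := by
    intro e he
    simp only [Finset.mem_filter] at he
    induction e using Sym2.ind with
    | _ k l =>
      have hkl : k ≠ l := by simpa using he.2
      obtain ⟨d1, d2, d3, d4, d5⟩ := hd k l hkl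
      simp only [Sym2.lift_mk]
      by_cases hadj : G.Adj k l
      · have hc := hcap k l hadj
        simp only [hadj, if_true] at d3
        have h1 : f k l * (t k - t l) ≤ f k l * (1 - v s(k, l)) :=
          mul_le_mul_of_nonneg_left (by linarith) (hpos k l)
        have h2 : f l k * (t l - t k) ≤ f l k * (1 - v s(k, l)) :=
          mul_le_mul_of_nonneg_left (by linarith) (hpos l k)
        nlinarith [mul_nonneg (neg_nonneg.2 d5) (by linarith : (0:ℝ) ≤ 1 - (f k l + f l k))]
      · have z1 := hnadj k l hkl hadj
        have z2 := hnadj l k hkl.symm (fun h => hadj h.symm)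
        rw [z1, z2]
        simpa using d4
  calc (∑ e ∈ Finset.univ.filter (fun e : Sym2 V => ¬ e.IsDiag), u e) + t i - t j
      = ∑ e ∈ Finset.univ.filter (fun e : Sym2 V => ¬ e.IsDiag),
          (u e + Sym2.lift ⟨fun a b => f a b * (t a - t b) + f b a * (t b - t a),
            fun a b => add_comm _ _⟩ e) := by
        rw [Finset.sum_add_distrib]
        rw [add_sub_assoc, h0, sym2_fiber_sum (fun a b => f a b * (t a - t b))]
    _ ≤ ∑ e ∈ Finset.univ.filter (fun e : Sym2 V => ¬ e.IsDiag),
          Sym2.lift ⟨fun a b => f a b + f b a, fun a b => add_comm _ _⟩ e :=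
        Finset.sum_le_sum key
    _ = ∑ k, ∑ l, f k l := by
        rw [← sym2_fiber_sum f, ← sum_eq_offDiag f hdiag]
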